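/- arXiv:2110.08888 — 3 statements merged into one kernel-verified Lean document; each statement's English description precedes it below -/
import Mathlib

section
/- Let K be a field of characteristic p > 0. For each i, the operator P_i on K[z_1,...,z_n] defined by P_i(f) = z_i^{p−1}·∂_i^{p−1}(f) satisfies P_i ∘ P_i = −P_i. -/
open MvPolynomial

/-- The operator `P_i(f) = z_i^{p-1} ∂_i^{p-1}(f)` on `K[z_1,…,z_n]`. -/
noncomputable def Pi_op (K : Type) [CommRing K] {n : ℕ} (p : ℕ) (i : Fin n)
    (f : MvPolynomial (Fin n) K) : MvPolynomial (Fin n) K :=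
  X i ^ (p - 1) * (fun g => pderiv i g)^[p - 1] f

open Finset in
lemma desc_zmod (p : ℕ) [Fact p.Prime] (k : ℕ) :
    (Nat.descFactorial k (p - 1) : ZMod p) = 0 ∨
      (Nat.descFactorial k (p - 1) : ZMod p) = -1 := by
  have hp : p.Prime := Fact.out
  rcases lt_or_ge k (p - 1) with h | h
  · left; rw [Nat.descFactorial_eq_zero_iff_lt.2 h]; simp
  · rw [Nat.descFactorial_eq_prod_range, Nat.cast_prod]
    have hc : ∀ j ∈ range (p - 1), ((k - j : ℕ) : ZMod p) = (k : ZMod p) - j := by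
      intro j hj
      exact_mod_cast Nat.cast_sub (le_trans (mem_range.1 hj).le h)
    rw [prod_congr rfl hc]
    by_cases hx : (k : ZMod p) = -1
    · right
      have hcc : ∀ j ∈ range (p - 1), (k : ZMod p) - j = ((p - 1 - j : ℕ) : ZMod p) := by
        intro j hj
        have hj' : j < p - 1 := mem_range.1 hj
        have h1 : 1 ≤ p := hp.one_lt.le
        rw [Nat.cast_sub (by omega), Nat.cast_sub (by omega : 1 ≤ p)]
        simp [hx]
      rw [prod_congr rfl hcc, ← Nat.cast_prod]
      have : (∏ j ∈ range (p - 1), (p - 1 - j)) = (p - 1).factorial := by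
        rw [← Nat.descFactorial_eq_prod_range, Nat.descFactorial_self]
      rw [this, ZMod.wilsons_lemma]
    · left
      haveI : NeZero p := ⟨hp.ne_zero⟩
      have hv : (k : ZMod p).val < p - 1 := by
        have h1 : (k : ZMod p).val < p := ZMod.val_lt _
        rcases lt_or_eq_of_le (by omega : (k : ZMod p).val ≤ p - 1) with h2 | h2
        · exact h2
        · exfalso
          apply hx
          have : ((k : ZMod p).val : ZMod p) = ((p - 1 : ℕ) : ZMod p) := by rw [h2]
          rw [ZMod.natCast_val, ZMod.cast_id] at this
          rw [this, Nat.cast_sub hp.one_lt.le]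
          simp
      refine prod_eq_zero (mem_range.2 hv) ?_
      rw [sub_eq_zero]
      rw [ZMod.natCast_val, ZMod.cast_id]

lemma iterate_pderiv_monomial (K : Type) [CommRing K] {n : ℕ} (i : Fin n) (m : ℕ)
    (s : Fin n →₀ ℕ) (a : K) :
    (fun g => pderiv i g)^[m] (monomial s a) =
      monomial (s - Finsupp.single i m) ((Nat.descFactorial (s i) m : K) * a) := by
  induction m with
  | zero => simp
  | succ m ih =>
    rw [Function.iterate_succ_apply', ih, pderiv_monomial]
    have he : s - Finsupp.single i m - Finsupp.single i 1 = s - Finsupp.single i (m + 1) := by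
      rw [tsub_tsub, ← Finsupp.single_add]
    have hv : ((s - Finsupp.single i m) i : ℕ) = s i - m := by
      rw [Finsupp.tsub_apply, Finsupp.single_eq_same]
    rw [he, hv, Nat.descFactorial_succ]
    congr 1
    push_cast
    ring

lemma Pi_op_monomial (K : Type) [CommRing K] {n : ℕ} (p : ℕ) (i : Fin n)
    (s : Fin n →₀ ℕ) (a : K) :
    Pi_op K p i (monomial s a) = monomial s ((Nat.descFactorial (s i) (p - 1) : K) * a) := by
  unfold Pi_op
  rw [iterate_pderiv_monomial, X_pow_eq_monomial, monomial_mul, one_mul]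
  rcases le_or_gt (p - 1) (s i) with h | h
  · congr 1
    rw [add_tsub_cancel_of_le]
    exact Finsupp.single_le_iff.2 h
  · rw [Nat.descFactorial_eq_zero_iff_lt.2 h]
    simp

lemma Pi_op_add (K : Type) [CommRing K] {n : ℕ} (p : ℕ) (i : Fin n)
    (f g : MvPolynomial (Fin n) K) :
    Pi_op K p i (f + g) = Pi_op K p i f + Pi_op K p i g := by
  unfold Pi_op
  have : ∀ m (f g : MvPolynomial (Fin n) K),
      (fun h => pderiv i h)^[m] (f + g) =
        (fun h => pderiv i h)^[m] f + (fun h => pderiv i h)^[m] g := by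
    intro m
    induction m with
    | zero => intro f g; simp
    | succ m ih =>
        intro f g
        simp only [Function.iterate_succ_apply, map_add, ih]
  rw [this, mul_add]

/-- Over a field of characteristic `p > 0`, `P_i ∘ P_i = -P_i`. -/
theorem Pi_op_comp_self (K : Type) [Field K] (p n : ℕ) [CharP K p] (hp : 0 < p)
    (i : Fin n) (f : MvPolynomial (Fin n) K) :
    Pi_op K p i (Pi_op K p i f) = - Pi_op K p i f := by
  haveI : NeZero p := ⟨hp.ne'⟩
  haveI : Fact p.Prime := CharP.char_is_prime_of_pos K p
  induction f using MvPolynomial.induction_on' with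
  | monomial s a =>
    rw [Pi_op_monomial, Pi_op_monomial, ← map_neg]
    congr 1
    have key := desc_zmod p (s i)
    have hK : ∀ x : ZMod p, ((Nat.descFactorial (s i) (p - 1) : ZMod p) = x) →
        (Nat.descFactorial (s i) (p - 1) : K) = (ZMod.castHom (dvd_refl p) K) x := by
      intro x hx
      rw [← hx, map_natCast]
    rcases key with h | h
    · rw [hK 0 h]; simp
    · rw [hK (-1) h, map_neg, map_one]; ring
  | add f g hf hg =>
    rw [Pi_op_add, Pi_op_add, hf, hg, neg_add]
end

section
/- Let K be a field of characteristic p > 0 and ω = Σ_I a_I dz_I a closed polynomial r-form on K^n. If for each multi-index I = (i_1 < ... < i_r) there exists s ∈ {1,...,r} with ∂_{i_s}^{p−1}(a_I) = 0, then ω is exact. -/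
open MvPolynomial

/-- An `r`-form in `n` variables with coefficients in `R`, written in the standard basis of the
`dz_I` indexed by the `r`-element subsets `I` of the set of variables. -/
abbrev GForm (R : Type) (n r : ℕ) := {s : Finset (Fin n) // s.card = r} → R

/-- The exterior derivative of an `r`-form, relative to a family `D` of partial derivatives:
`(dω)_T = ∑_{j ∈ T} (-1)^{pos of j in T} D_j ω_{T∖{j}}`. -/
noncomputable def gextd {R : Type} [CommRing R] {n r : ℕ} (D : Fin n → R → R)
    (ω : GForm R n r) : GForm R n (r + 1) :=
  fun T => ∑ j ∈ T.1.attach,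
    (-1 : R) ^ ((T.1.filter (fun k => k < j.1)).card) *
      D j.1 (ω ⟨T.1.erase j.1, by rw [Finset.card_erase_of_mem j.2, T.2]; rfl⟩)

/-- The iterated operator `∂_{i_1}^{p-1} ⋯ ∂_{i_r}^{p-1}` for `T = {i_1 < … < i_r}`. -/
def gpdSet {R : Type} {n : ℕ} (D : Fin n → R → R) (p : ℕ) (T : Finset (Fin n)) (f : R) : R :=
  (T.sort (· ≤ ·)).foldr (fun i g => (D i)^[p - 1] g) f

/-- The family of formal partial derivatives on `K[z_1,…,z_n]`. -/
noncomputable def pderivFam (K : Type) [CommRing K] (n : ℕ) :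
    Fin n → MvPolynomial (Fin n) K → MvPolynomial (Fin n) K :=
  fun i f => pderiv i f

section Aux

variable {K : Type} [Field K] {n r : ℕ}

private lemma my_coeff_pderiv (i : Fin n) (f : MvPolynomial (Fin n) K) (v : Fin n →₀ ℕ) :
    coeff v (pderiv i f) = (v i + 1 : ℕ) * coeff (v + Finsupp.single i 1) f := by
  induction f using MvPolynomial.induction_on' with
  | add f g hf hg => simp [hf, hg]; ring
  | monomial s a =>
      rw [pderiv_monomial]
      simp only [coeff_monomial]
      by_cases hs : s = v + Finsupp.single i 1
      · subst hs
        rw [if_pos (add_tsub_cancel_right _ _), if_pos rfl]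
        push_cast
        simp [Finsupp.add_apply, Finsupp.single_apply]
        ring
      · rw [if_neg hs, mul_zero]
        by_cases h2 : s - Finsupp.single i 1 = v
        · have hsi : s i = 0 := by
            by_contra hne
            apply hs
            ext j
            have := congrFun (congrArg (fun (g : Fin n →₀ ℕ) => (g : Fin n → ℕ)) h2) j
            simp only [Finsupp.tsub_apply, Finsupp.single_apply, Finsupp.add_apply] at this ⊢
            by_cases hj : i = j
            · subst hj; simp at this ⊢; omega
            · simp [hj] at this ⊢; omega
          rw [if_pos h2, hsi]
          push_cast
          ring
        · rw [if_neg h2]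

private lemma my_coeff_pderiv_iter (i : Fin n) (k : ℕ) (f : MvPolynomial (Fin n) K)
    (v : Fin n →₀ ℕ) :
    coeff v ((fun g => pderiv i g)^[k] f)
      = ((∏ t ∈ Finset.range k, (v i + t + 1) : ℕ) : K) * coeff (v + Finsupp.single i k) f := by
  induction k generalizing f with
  | zero => simp
  | succ k ih =>
      rw [Function.iterate_succ_apply, ih, my_coeff_pderiv]
      rw [Finset.prod_range_succ]
      have h1 : (v + Finsupp.single i k) i = v i + k := by
        simp [Finsupp.add_apply, Finsupp.single_apply]
      have h2 : v + Finsupp.single i k + Finsupp.single i 1 = v + Finsupp.single i (k+1) := by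
        rw [add_assoc, ← Finsupp.single_add]
      rw [h1, h2]
      push_cast
      ring

private lemma my_coeff_vanish (p : ℕ) [CharP K p] (hp : 0 < p) {i : Fin n}
    {f : MvPolynomial (Fin n) K} (hf : (fun g => pderiv i g)^[p-1] f = 0)
    {u : Fin n →₀ ℕ} (hu : p ∣ u i + 1) : coeff u f = 0 := by
  obtain ⟨k, hk⟩ := hu
  have hk1 : 1 ≤ k := by
    rcases Nat.eq_zero_or_pos k with h | h
    · subst h; omega
    · exact h
  have hm : p * k = p * (k - 1) + p := by
    rcases k with _ | k
    · omega
    · simp [Nat.mul_succ]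
  have hui : p - 1 ≤ u i := by omega
  set v : Fin n →₀ ℕ := u - Finsupp.single i (p-1) with hv
  have huv : v + Finsupp.single i (p-1) = u := by
    ext j
    simp only [hv, Finsupp.add_apply, Finsupp.tsub_apply, Finsupp.single_apply]
    by_cases hj : i = j
    · subst hj; simp; omega
    · simp [hj]
  have h0 := congrArg (coeff v) hf
  rw [my_coeff_pderiv_iter, huv, coeff_zero] at h0
  have hvi : v i = p * (k-1) := by
    have h1 : v i = u i - (p-1) := by
      simp [hv, Finsupp.tsub_apply, Finsupp.single_apply]
    omega
  have hne : ((∏ t ∈ Finset.range (p-1), (v i + t + 1) : ℕ) : K) ≠ 0 := by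
    push_cast
    apply Finset.prod_ne_zero_iff.mpr
    intro t ht
    rw [hvi]
    have hnd : ¬ p ∣ (p*(k-1) + t + 1) := by
      intro hd
      have : p ∣ t + 1 := by
        have := Nat.dvd_sub hd (Dvd.intro (k-1) rfl)
        simpa [Nat.add_sub_cancel_left, add_assoc] using this
      have := Nat.le_of_dvd (by omega) this
      simp [Finset.mem_range] at ht
      omega
    have := (CharP.cast_eq_zero_iff K p (p*(k-1) + t + 1)).not.mpr hnd
    push_cast at this
    convert this using 2 <;> push_cast <;> ring_nf
  rcases mul_eq_zero.mp h0 with h | h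
  · exact absurd h hne
  · exact h

/-- Unbundled component access for a form. -/
noncomputable def auxOm (θ : GForm (MvPolynomial (Fin n) K) n r) (S : Finset (Fin n)) :
    MvPolynomial (Fin n) K :=
  if h : S.card = r then θ ⟨S, h⟩ else 0

lemma auxOm_eq (θ : GForm (MvPolynomial (Fin n) K) n r) {S : Finset (Fin n)} (h : S.card = r) :
    auxOm θ S = θ ⟨S, h⟩ := dif_pos h

lemma coeff_gextd (θ : GForm (MvPolynomial (Fin n) K) n r)
    (T : {s : Finset (Fin n) // s.card = r + 1}) (u : Fin n →₀ ℕ) :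
    coeff u (gextd (pderivFam K n) θ T)
    = ∑ j ∈ T.1, (-1 : K) ^ ((T.1.filter (· < j)).card) * (u j + 1 : ℕ)
        * coeff (u + Finsupp.single j 1) (auxOm θ (T.1.erase j)) := by
  obtain ⟨S, hS⟩ := T
  unfold gextd pderivFam
  rw [coeff_sum]
  rw [← Finset.sum_attach S (fun j => (-1 : K) ^ ((S.filter (· < j)).card) * (u j + 1 : ℕ)
        * coeff (u + Finsupp.single j 1) (auxOm θ (S.erase j)))]
  apply Finset.sum_congr rfl
  intro j _
  have hcard : (S.erase j.1).card = r := by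
    rw [Finset.card_erase_of_mem j.2, hS]
    rfl
  rw [show (θ ⟨S.erase j.1, by rw [Finset.card_erase_of_mem j.2, hS]; rfl⟩)
      = auxOm θ (S.erase j.1) from (auxOm_eq θ hcard).symm]
  have hC : ((-1 : MvPolynomial (Fin n) K) ^ ((S.filter (fun k => k < j.1)).card))
      = C ((-1 : K) ^ ((S.filter (fun k => k < j.1)).card)) := by
    rw [map_pow, map_neg, map_one]
  rw [hC, coeff_C_mul, my_coeff_pderiv]
  ring

/-- The set of "good" indices for the multidegree attached to `(J, v)`. -/
def goodSet (p : ℕ) (J : Finset (Fin n)) (v : Fin n →₀ ℕ) : Finset (Fin n) :=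
  Finset.univ.filter fun i => ¬ p ∣ (v i + if i ∈ J then 1 else 0)

lemma goodSet_erase (p : ℕ) {T : Finset (Fin n)} {j : Fin n} (hj : j ∈ T) (u : Fin n →₀ ℕ) :
    goodSet p (T.erase j) (u + Finsupp.single j 1) = goodSet p T u := by
  unfold goodSet
  apply Finset.filter_congr
  intro i _
  by_cases hij : j = i
  · subst hij
    rw [Finsupp.add_apply, Finsupp.single_apply, if_pos rfl, if_pos hj,
      if_neg (fun hmem => (Finset.mem_erase.mp hmem).1 rfl), add_zero]
  · rw [Finsupp.add_apply, Finsupp.single_apply, if_neg hij, add_zero]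
    have hmem : i ∈ T.erase j ↔ i ∈ T :=
      ⟨fun hh => (Finset.mem_erase.mp hh).2,
       fun hh => Finset.mem_erase.mpr ⟨fun hc => hij hc.symm, hh⟩⟩
    rw [if_congr hmem rfl rfl]

/-- The homotopy coefficient function. -/
noncomputable def Fc (p : ℕ) (Om : Finset (Fin n) → MvPolynomial (Fin n) K)
    (J : Finset (Fin n)) (v : Fin n →₀ ℕ) : K :=
  if h : (goodSet p J v).Nonempty then
    if (goodSet p J v).min' h ∈ J then 0
    else (-1 : K) ^ ((J.filter (· < (goodSet p J v).min' h)).card)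
      * ((v ((goodSet p J v).min' h) : K))⁻¹
      * coeff (v - Finsupp.single ((goodSet p J v).min' h) 1)
          (Om (insert ((goodSet p J v).min' h) J))
  else 0

lemma Fc_eq (p : ℕ) (Om : Finset (Fin n) → MvPolynomial (Fin n) K) (J : Finset (Fin n))
    (v : Fin n →₀ ℕ) {g : Finset (Fin n)} (hgs : goodSet p J v = g) (hne : g.Nonempty) :
    Fc p Om J v =
      if g.min' hne ∈ J then 0
      else (-1 : K) ^ ((J.filter (· < g.min' hne)).card) * ((v (g.min' hne) : K))⁻¹
        * coeff (v - Finsupp.single (g.min' hne) 1) (Om (insert (g.min' hne) J)) := by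
  subst hgs
  rw [Fc, dif_pos hne]

lemma Fc_eq_zero (p : ℕ) (Om : Finset (Fin n) → MvPolynomial (Fin n) K) (J : Finset (Fin n))
    (v : Fin n →₀ ℕ) (hgs : ¬ (goodSet p J v).Nonempty) : Fc p Om J v = 0 := dif_neg hgs

/-- The components of the homotopy form. -/
noncomputable def etaJ (p : ℕ) (Om : Finset (Fin n) → MvPolynomial (Fin n) K)
    (J : Finset (Fin n)) : MvPolynomial (Fin n) K :=
  ∑ v ∈ Finset.univ.biUnion
      (fun i : Fin n => (Om (insert i J)).support.image (· + Finsupp.single i 1)),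
    monomial v (Fc p Om J v)

lemma coeff_etaJ (p : ℕ) (Om : Finset (Fin n) → MvPolynomial (Fin n) K)
    (J : Finset (Fin n)) (v : Fin n →₀ ℕ) :
    coeff v (etaJ p Om J) = Fc p Om J v := by
  unfold etaJ
  rw [coeff_sum]
  simp only [coeff_monomial]
  rw [Finset.sum_ite_eq' _ v (fun v => Fc p Om J v)]
  split_ifs with hmem
  · rfl
  · by_contra hF
    apply hmem
    have hF' : Fc p Om J v ≠ 0 := fun hc => hF hc.symm
    rw [Fc] at hF'
    split_ifs at hF' with h1 h2
    rotate_left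
    rotate_left
    · exact absurd rfl hF'
    · exact absurd rfl hF'
    · set i0 := (goodSet p J v).min' h1 with hi0
      have hco : coeff (v - Finsupp.single i0 1) (Om (insert i0 J)) ≠ 0 := by
        intro hc
        rw [hc, mul_zero] at hF'
        exact hF' rfl
      have hvpos : 1 ≤ v i0 := by
        have hnd : ¬ p ∣ (v i0 + if i0 ∈ J then 1 else 0) := by
          have hm2 := (goodSet p J v).min'_mem h1
          unfold goodSet at hm2
          exact (Finset.mem_filter.mp hm2).2
        rw [if_neg h2, add_zero] at hnd
        by_contra hlt
        have h0 : v i0 = 0 := by omega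
        rw [h0] at hnd
        exact hnd (dvd_zero p)
      apply Finset.mem_biUnion.mpr
      refine ⟨i0, Finset.mem_univ _, ?_⟩
      apply Finset.mem_image.mpr
      refine ⟨v - Finsupp.single i0 1, (mem_support_iff).mpr hco, ?_⟩
      ext j
      simp only [Finsupp.add_apply, Finsupp.tsub_apply, Finsupp.single_apply]
      by_cases hj : i0 = j
      · subst hj; simp; omega
      · simp [hj]

end Aux

theorem closed_form_with_single_index_vanishing_is_exact
    (K : Type) [Field K] (p n r : ℕ) [CharP K p] (hp : 0 < p)
    (ω : GForm (MvPolynomial (Fin n) K) n (r + 1))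
    (hclosed : gextd (pderivFam K n) ω = 0)
    (h : ∀ T : {s : Finset (Fin n) // s.card = r + 1},
      ∃ i ∈ T.1, (fun g => pderiv i g)^[p - 1] (ω T) = 0) :
    ∃ η : GForm (MvPolynomial (Fin n) K) n r, gextd (pderivFam K n) η = ω := by
  classical
  refine ⟨fun J => etaJ p (auxOm ω) J.1, ?_⟩
  funext T
  apply MvPolynomial.ext
  intro u
  rw [coeff_gextd]
  have hstep : ∀ j ∈ T.1,
      (-1 : K) ^ ((T.1.filter (· < j)).card) * ((u j + 1 : ℕ) : K)
        * coeff (u + Finsupp.single j 1)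
            (auxOm (fun J => etaJ p (auxOm ω) J.1 : GForm (MvPolynomial (Fin n) K) n r)
              (T.1.erase j))
      = (-1 : K) ^ ((T.1.filter (· < j)).card) * ((u j + 1 : ℕ) : K)
        * Fc p (auxOm ω) (T.1.erase j) (u + Finsupp.single j 1) := by
    intro j hj
    have hc : (T.1.erase j).card = r := by
      rw [Finset.card_erase_of_mem hj, T.2]
      rfl
    rw [auxOm_eq _ hc]
    rw [coeff_etaJ]
  rw [Finset.sum_congr rfl hstep]
  by_cases hne : (goodSet p T.1 u).Nonempty
  · -- good index exists
    obtain ⟨i0, hi0⟩ : ∃ i, (goodSet p T.1 u).min' hne = i := ⟨_, rfl⟩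
    have hi0mem : i0 ∈ goodSet p T.1 u := hi0 ▸ (goodSet p T.1 u).min'_mem hne
    have hi0good : ¬ p ∣ (u i0 + if i0 ∈ T.1 then 1 else 0) := by
      unfold goodSet at hi0mem
      exact (Finset.mem_filter.mp hi0mem).2
    by_cases hi0T : i0 ∈ T.1
    · -- case B1 : the minimal good index belongs to T
      rw [if_pos hi0T] at hi0good
      have hcast : ((u i0 + 1 : ℕ) : K) ≠ 0 := by
        rw [Ne, CharP.cast_eq_zero_iff K p]
        exact hi0good
      have hFj : ∀ j ∈ T.1, j ≠ i0 →
          (-1 : K) ^ ((T.1.filter (· < j)).card) * ((u j + 1 : ℕ) : K)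
            * Fc p (auxOm ω) (T.1.erase j) (u + Finsupp.single j 1) = 0 := by
        intro j hj hne'
        rw [Fc_eq p (auxOm ω) _ _ (goodSet_erase p hj u) hne]
        simp only [hi0]
        rw [if_pos (Finset.mem_erase.mpr ⟨Ne.symm hne', hi0T⟩), mul_zero]
      rw [Finset.sum_eq_single i0 hFj (fun hni => absurd hi0T hni)]
      rw [Fc_eq p (auxOm ω) _ _ (goodSet_erase p hi0T u) hne]
      simp only [hi0]
      rw [if_neg (fun hmem => (Finset.mem_erase.mp hmem).1 rfl)]
      have e1 : Finset.filter (· < i0) (T.1.erase i0) = Finset.filter (· < i0) T.1 := by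
        rw [Finset.filter_erase]
        apply Finset.erase_eq_of_notMem
        simp
      have e2 : (u + Finsupp.single i0 1 : Fin n →₀ ℕ) i0 = u i0 + 1 := by
        rw [Finsupp.add_apply, Finsupp.single_apply, if_pos rfl]
      have e3 : (u + Finsupp.single i0 1) - Finsupp.single i0 1 = u :=
        add_tsub_cancel_right _ _
      have e4 : insert i0 (T.1.erase i0) = T.1 := Finset.insert_erase hi0T
      rw [e1, e2, e3, e4, auxOm_eq ω T.2]
      have hss : (-1:K) ^ ((T.1.filter (· < i0)).card)
          * (-1:K) ^ ((T.1.filter (· < i0)).card) = 1 := by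
        rw [← pow_add]
        exact Even.neg_one_pow ⟨_, rfl⟩
      calc (-1:K) ^ ((T.1.filter (· < i0)).card) * ((u i0 + 1 : ℕ) : K)
            * ((-1:K) ^ ((T.1.filter (· < i0)).card) * (((u i0 + 1 : ℕ) : K))⁻¹
              * coeff u (ω ⟨T.1, T.2⟩))
          = ((-1:K) ^ ((T.1.filter (· < i0)).card) * (-1:K) ^ ((T.1.filter (· < i0)).card))
            * (((u i0 + 1 : ℕ) : K) * (((u i0 + 1 : ℕ) : K))⁻¹) * coeff u (ω ⟨T.1, T.2⟩) := by
            ring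
        _ = coeff u (ω T) := by
            rw [hss, mul_inv_cancel₀ hcast, one_mul, one_mul]
    · -- case B2 : the minimal good index does not belong to T
      rw [if_neg hi0T, add_zero] at hi0good
      have hupos : 1 ≤ u i0 := by
        by_contra hlt
        have h0 : u i0 = 0 := by omega
        rw [h0] at hi0good
        exact hi0good (dvd_zero p)
      have hcast : ((u i0 : ℕ) : K) ≠ 0 := by
        rw [Ne, CharP.cast_eq_zero_iff K p]
        exact hi0good
      set u' : Fin n →₀ ℕ := u - Finsupp.single i0 1 with hu'def
      have hu'app : ∀ x, u' x = u x - (if i0 = x then 1 else 0) := by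
        intro x
        simp [hu'def, Finsupp.tsub_apply, Finsupp.single_apply]
      have hu'j : ∀ x, x ≠ i0 → u' x = u x := by
        intro x hx
        rw [hu'app x, if_neg (fun hc => hx hc.symm)]
        omega
      have hu'i : u' i0 + 1 = u i0 := by
        rw [hu'app i0, if_pos rfl]
        omega
      have hu'add : u' + Finsupp.single i0 1 = u := by
        ext x
        simp only [Finsupp.add_apply, Finsupp.single_apply, hu'app x]
        by_cases hx : i0 = x
        · subst hx; simp; omega
        · simp [hx]
      have hcard' : (insert i0 T.1).card = (r+1)+1 := by
        rw [Finset.card_insert_of_notMem hi0T, T.2]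
      have hcl := congrArg (coeff u') (congrFun hclosed ⟨insert i0 T.1, hcard'⟩)
      rw [coeff_gextd ω ⟨insert i0 T.1, hcard'⟩ u'] at hcl
      simp only [Pi.zero_apply, coeff_zero] at hcl
      rw [Finset.sum_insert hi0T] at hcl
      have ei : Finset.filter (· < i0) (insert i0 T.1) = Finset.filter (· < i0) T.1 := by
        rw [Finset.filter_insert, if_neg (lt_irrefl i0)]
      have eE : Finset.erase (insert i0 T.1) i0 = T.1 := Finset.erase_insert hi0T
      rw [ei, eE, hu'i, hu'add, auxOm_eq ω T.2] at hcl
      have hsum : ∑ j ∈ T.1, (-1:K) ^ (((insert i0 T.1).filter (· < j)).card)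
            * ((u' j + 1 : ℕ) : K)
            * coeff (u' + Finsupp.single j 1) (auxOm ω ((insert i0 T.1).erase j))
          = -((-1:K) ^ ((T.1.filter (· < i0)).card) * ((u i0 : ℕ) : K)
              * coeff u (ω ⟨T.1, T.2⟩)) :=
        eq_neg_of_add_eq_zero_right hcl
      have hterm : ∀ j ∈ T.1,
          (-1 : K) ^ ((T.1.filter (· < j)).card) * ((u j + 1 : ℕ) : K)
            * Fc p (auxOm ω) (T.1.erase j) (u + Finsupp.single j 1)
          = (-1:K) ^ ((T.1.filter (· < i0)).card + 1) * (((u i0 : ℕ) : K))⁻¹ *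
              ((-1:K) ^ (((insert i0 T.1).filter (· < j)).card) * ((u' j + 1 : ℕ) : K)
                * coeff (u' + Finsupp.single j 1) (auxOm ω ((insert i0 T.1).erase j))) := by
        intro j hj
        have hji0 : j ≠ i0 := fun hc => hi0T (hc ▸ hj)
        rw [Fc_eq p (auxOm ω) _ _ (goodSet_erase p hj u) hne]
        simp only [hi0]
        rw [if_neg (fun hmem => hi0T (Finset.mem_erase.mp hmem).2)]
        have e1 : (u + Finsupp.single j 1 : Fin n →₀ ℕ) i0 = u i0 := by
          rw [Finsupp.add_apply, Finsupp.single_apply, if_neg hji0, add_zero]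
        have e2 : (u + Finsupp.single j 1) - Finsupp.single i0 1
            = u' + Finsupp.single j 1 := by
          ext x
          simp only [Finsupp.add_apply, Finsupp.tsub_apply, Finsupp.single_apply, hu'app x]
          by_cases hx : i0 = x
          · subst hx
            simp [hji0]
          · simp [hx]
        have e3 : insert i0 (T.1.erase j) = (insert i0 T.1).erase j :=
          (Finset.erase_insert_of_ne (Ne.symm hji0)).symm
        have e4 : ((u' j + 1 : ℕ) : K) = ((u j + 1 : ℕ) : K) := by
          rw [hu'j j hji0]
        rw [e1, e2, e3, e4]
        have hmemiff : j ∈ Finset.filter (fun x => x < i0) T.1 ↔ j < i0 := by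
          simp [Finset.mem_filter, hj]
        have hBj : ((T.1.erase j).filter (· < i0)).card + (if j < i0 then 1 else 0)
            = (T.1.filter (· < i0)).card := by
          rw [Finset.filter_erase, Finset.card_erase_eq_ite]
          by_cases hcase : j < i0
          · rw [if_pos (hmemiff.mpr hcase), if_pos hcase]
            have hposA : 0 < (Finset.filter (fun x => x < i0) T.1).card :=
              Finset.card_pos.mpr ⟨j, hmemiff.mpr hcase⟩
            omega
          · rw [if_neg (fun hm => hcase (hmemiff.mp hm)), if_neg hcase, add_zero]
        have hEj : ((insert i0 T.1).filter (· < j)).card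
            = (T.1.filter (· < j)).card + (if i0 < j then 1 else 0) := by
          rw [Finset.filter_insert]
          by_cases hcase : i0 < j
          · rw [if_pos hcase, if_pos hcase,
              Finset.card_insert_of_notMem
                (fun hmem : i0 ∈ Finset.filter (fun x => x < j) T.1 =>
                  hi0T (Finset.mem_filter.mp hmem).1)]
          · rw [if_neg hcase, if_neg hcase, add_zero]
        have hlt1 : (if j < i0 then 1 else 0) + (if i0 < j then 1 else 0) = 1 := by
          rcases lt_or_gt_of_ne hji0 with hc | hc
          · rw [if_pos hc, if_neg (asymm hc)]
          · rw [if_neg (asymm hc), if_pos hc]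
        have hsign : (-1:K) ^ (((T.1.erase j).filter (· < i0)).card)
              * (-1:K) ^ ((T.1.filter (· < j)).card)
            = (-1:K) ^ ((T.1.filter (· < i0)).card + 1)
              * (-1:K) ^ (((insert i0 T.1).filter (· < j)).card) := by
          rw [← pow_add, ← pow_add, neg_one_pow_eq_pow_mod_two,
            neg_one_pow_eq_pow_mod_two
              (n := (T.1.filter (· < i0)).card + 1 + ((insert i0 T.1).filter (· < j)).card)]
          congr 1
          rw [hEj]
          omega
        calc (-1:K) ^ ((T.1.filter (· < j)).card) * ((u j + 1 : ℕ) : K)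
              * ((-1:K) ^ (((T.1.erase j).filter (· < i0)).card) * (((u i0 : ℕ) : K))⁻¹
                * coeff (u' + Finsupp.single j 1) (auxOm ω ((insert i0 T.1).erase j)))
            = ((-1:K) ^ (((T.1.erase j).filter (· < i0)).card)
                * (-1:K) ^ ((T.1.filter (· < j)).card))
              * (((u j + 1 : ℕ) : K) * (((u i0 : ℕ) : K))⁻¹
                * coeff (u' + Finsupp.single j 1) (auxOm ω ((insert i0 T.1).erase j))) := by
              ring
          _ = ((-1:K) ^ ((T.1.filter (· < i0)).card + 1)
                * (-1:K) ^ (((insert i0 T.1).filter (· < j)).card))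
              * (((u j + 1 : ℕ) : K) * (((u i0 : ℕ) : K))⁻¹
                * coeff (u' + Finsupp.single j 1) (auxOm ω ((insert i0 T.1).erase j))) := by
              rw [hsign]
          _ = (-1:K) ^ ((T.1.filter (· < i0)).card + 1) * (((u i0 : ℕ) : K))⁻¹ *
              ((-1:K) ^ (((insert i0 T.1).filter (· < j)).card) * ((u j + 1 : ℕ) : K)
                * coeff (u' + Finsupp.single j 1) (auxOm ω ((insert i0 T.1).erase j))) := by
              ring
      rw [Finset.sum_congr rfl hterm, ← Finset.mul_sum, hsum]
      have hss : (-1:K) ^ ((T.1.filter (· < i0)).card + 1)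
          * (-1:K) ^ ((T.1.filter (· < i0)).card) = -1 := by
        rw [← pow_add]
        exact Odd.neg_one_pow ⟨(T.1.filter (· < i0)).card, by ring⟩
      calc (-1:K) ^ ((T.1.filter (· < i0)).card + 1) * (((u i0 : ℕ) : K))⁻¹ *
            -((-1:K) ^ ((T.1.filter (· < i0)).card) * ((u i0 : ℕ) : K)
              * coeff u (ω ⟨T.1, T.2⟩))
          = -((-1:K) ^ ((T.1.filter (· < i0)).card + 1)
              * (-1:K) ^ ((T.1.filter (· < i0)).card))
            * ((((u i0 : ℕ) : K))⁻¹ * ((u i0 : ℕ) : K)) * coeff u (ω ⟨T.1, T.2⟩) := by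
            ring
        _ = coeff u (ω T) := by
            rw [hss, inv_mul_cancel₀ hcast]
            ring
  · -- no good index : both sides vanish
    have hzero : ∀ j ∈ T.1,
        (-1 : K) ^ ((T.1.filter (· < j)).card) * ((u j + 1 : ℕ) : K)
          * Fc p (auxOm ω) (T.1.erase j) (u + Finsupp.single j 1) = 0 := by
      intro j hj
      rw [Fc_eq_zero p (auxOm ω) _ _ (by rw [goodSet_erase p hj u]; exact hne), mul_zero]
    rw [Finset.sum_congr rfl hzero, Finset.sum_const_zero]
    obtain ⟨i, hiT, hker⟩ := h T
    have hdvd : p ∣ u i + 1 := by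
      by_contra hnd
      apply hne
      refine ⟨i, ?_⟩
      unfold goodSet
      rw [Finset.mem_filter]
      exact ⟨Finset.mem_univ _, by rw [if_pos hiT]; exact hnd⟩
    exact (my_coeff_vanish p hp hker hdvd).symm
end

section
/- Let K be a field of characteristic p > 0 and ω = Σ_I a_I dz_I a closed rational r-form (dω = 0) over K(z_1,...,z_n). Then for every multi-index I, the function ∂_I^{p−1}(a_I) := ∂_{i_1}^{p−1}···∂_{i_r}^{p−1}(a_I) lies in K(z_1^p,...,z_n^p); equivalently ∂_j(∂_I^{p−1}(a_I)) = 0 for all j = 1,...,n. -/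
open MvPolynomial

section PolyAux
variable {K : Type} [Field K] {n : ℕ}


theorem pderiv_comm' (i j : Fin n) (q : MvPolynomial (Fin n) K) :
    pderiv i (pderiv j q) = pderiv j (pderiv i q) := by
  induction q using MvPolynomial.induction_on' with
  | add f g hf hg => simp [map_add, hf, hg]
  | monomial s a =>
    by_cases h : i = j
    · subst h; rfl
    · simp only [pderiv_monomial]
      rw [Finsupp.tsub_apply, Finsupp.tsub_apply, Finsupp.single_apply, Finsupp.single_apply]
      rw [if_neg h, if_neg (Ne.symm h)]
      rw [tsub_tsub, tsub_tsub, add_comm]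
      simp [mul_right_comm]

theorem pderiv_iterate_monomial (j : Fin n) (k : ℕ) (s : Fin n →₀ ℕ) (a : K) :
    (fun q => pderiv j q)^[k] (monomial s a) =
      monomial (s - Finsupp.single j k) (a * ∏ t ∈ Finset.range k, ((s j - t : ℕ) : K)) := by
  induction k with
  | zero => simp
  | succ k ih =>
    rw [Function.iterate_succ_apply', ih, pderiv_monomial]
    rw [Finset.prod_range_succ, Finsupp.tsub_apply, Finsupp.single_eq_same]
    rw [tsub_tsub, ← Finsupp.single_add]
    ring_nf


theorem cast_factorial_aux (p : ℕ) [CharP K p] (hp : p.Prime) (e : ℕ) :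
    (∏ t ∈ Finset.range (p - 1), ((e + (p - 1) - t : ℕ) : K)) =
      if p ∣ e then -1 else 0 := by
  have hp2 : 2 ≤ p := hp.two_le
  split_ifs with hd
  · have he : (e : K) = 0 := (CharP.cast_eq_zero_iff K p e).mpr hd
    have : ∀ t ∈ Finset.range (p - 1), ((e + (p - 1) - t : ℕ) : K) = ((p - 1 - t : ℕ) : K) := by
      intro t ht
      have ht' : t ≤ p - 1 := le_of_lt (Finset.mem_range.mp ht)
      have : e + (p - 1) - t = e + (p - 1 - t) := by omega
      rw [this, Nat.cast_add, he, zero_add]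
    rw [Finset.prod_congr rfl this]
    have h1 : (∏ t ∈ Finset.range (p - 1), ((p - 1 - t : ℕ) : K))
        = (((p-1).factorial : ℕ) : K) := by
      rw [← Nat.cast_prod]
      congr 1
      have := Finset.prod_range_reflect (fun x => x + 1) (p - 1)
      rw [Finset.prod_range_add_one_eq_factorial] at this
      rw [← this]
      apply Finset.prod_congr rfl
      intro t ht
      have := Finset.mem_range.mp ht
      omega
    rw [h1]
    haveI : Fact p.Prime := ⟨hp⟩
    rw [← map_natCast (ZMod.castHom (dvd_refl p) K) ((p-1).factorial),
      ZMod.wilsons_lemma, map_neg, map_one]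
  · -- some factor is zero
    set m := e % p with hm
    have hm1 : 1 ≤ m := by
      rcases Nat.eq_zero_or_pos m with h | h
      · exact absurd (Nat.dvd_of_mod_eq_zero (hm ▸ h)) hd
      · exact h
    have hmp : m < p := Nat.mod_lt _ (by omega)
    have hme : m ≤ e := Nat.mod_le _ _
    apply Finset.prod_eq_zero (i := m - 1) (Finset.mem_range.mpr (by omega))
    have h1 : e + (p - 1) - (m - 1) = (e - m) + p := by omega
    rw [h1]
    have h2 : e - m = p * (e / p) := by
      have := Nat.div_add_mod e p
      omega
    rw [Nat.cast_add, h2, Nat.cast_mul, CharP.cast_eq_zero K p]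
    ring
/-- `∂_j^p = 0` on polynomials. -/
theorem pderiv_iterate_p (p : ℕ) [CharP K p] (hp : p.Prime) (j : Fin n)
    (q : MvPolynomial (Fin n) K) : (fun q => pderiv j q)^[p] q = 0 := by
  induction q using MvPolynomial.induction_on' with
  | add f g hf hg =>
    have hadd : ∀ (k : ℕ) (f g : MvPolynomial (Fin n) K),
        (fun q => pderiv j q)^[k] (f + g)
          = (fun q => pderiv j q)^[k] f + (fun q => pderiv j q)^[k] g := by
      intro k
      induction k with
      | zero => intro f g; rfl
      | succ k ih => intro f g; rw [Function.iterate_succ_apply', Function.iterate_succ_apply',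
          Function.iterate_succ_apply', ih, map_add]
    rw [hadd, hf, hg, add_zero]
  | monomial s a =>
    rw [pderiv_iterate_monomial]
    have : (∏ t ∈ Finset.range p, ((s j - t : ℕ) : K)) = 0 := by
      apply Finset.prod_eq_zero (i := s j % p) (Finset.mem_range.mpr (Nat.mod_lt _ hp.pos))
      have h2 : s j - s j % p = p * (s j / p) := by
        have := Nat.div_add_mod (s j) p; omega
      rw [h2, Nat.cast_mul, CharP.cast_eq_zero K p, zero_mul]
    rw [this, mul_zero, map_zero]

noncomputable def polyPi (p : ℕ) (j : Fin n) (q : MvPolynomial (Fin n) K) :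
    MvPolynomial (Fin n) K :=
  -((fun q => pderiv j q)^[p - 1] (X j ^ (p - 1) * q))

theorem polyPi_monomial (p : ℕ) [CharP K p] (hp : p.Prime) (j : Fin n) (e : Fin n →₀ ℕ)
    (a : K) : polyPi p j (monomial e a) = if p ∣ e j then monomial e a else 0 := by
  rw [polyPi, X_pow_eq_monomial, monomial_mul, pderiv_iterate_monomial]
  have h1 : (Finsupp.single j (p - 1) + e) j = e j + (p - 1) := by
    rw [Finsupp.add_apply, Finsupp.single_eq_same, add_comm]
  have h2 : Finsupp.single j (p - 1) + e - Finsupp.single j (p - 1) = e := by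
    rw [add_comm, add_tsub_cancel_right]
  rw [h1, h2, one_mul]
  rw [Finset.prod_congr rfl (fun t _ => rfl), cast_factorial_aux p hp (e j)]
  split_ifs with hd
  · rw [mul_neg_one, map_neg, neg_neg]
  · rw [mul_zero, map_zero, neg_zero]

theorem polyPi_zero (p : ℕ) (j : Fin n) : polyPi p j (0 : MvPolynomial (Fin n) K) = 0 := by
  rw [polyPi, mul_zero]
  have : ∀ k, (fun q => pderiv j q)^[k] (0 : MvPolynomial (Fin n) K) = 0 := by
    intro k; induction k with
    | zero => rfl
    | succ k ih => rw [Function.iterate_succ_apply, map_zero, ih]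
  rw [this, neg_zero]

theorem polyPi_foldr_monomial (p : ℕ) [CharP K p] (hp : p.Prime) (l : List (Fin n))
    (e : Fin n →₀ ℕ) :
    l.foldr (polyPi p) (monomial e (1 : K)) =
      if ∀ j ∈ l, p ∣ e j then monomial e (1 : K) else 0 := by
  induction l with
  | nil => simp
  | cons j l ih =>
    rw [List.foldr_cons, ih]
    by_cases h : ∀ i ∈ l, p ∣ e i
    · rw [if_pos h, polyPi_monomial p hp]
      by_cases hj : p ∣ e j
      · rw [if_pos hj, if_pos]
        intro i hi
        rcases List.mem_cons.mp hi with h1 | h1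
        · exact h1 ▸ hj
        · exact h i h1
      · rw [if_neg hj, if_neg]
        intro hall; exact hj (hall j List.mem_cons_self)
    · rw [if_neg h, polyPi_zero, if_neg]
      intro hall; exact h fun i hi => hall i (List.mem_cons_of_mem j hi)

end PolyAux
section FieldAux
variable {K : Type} [Field K] {n : ℕ}
variable {L : Type} [Field L] [Algebra (MvPolynomial (Fin n) K) L]
  [IsFractionRing (MvPolynomial (Fin n) K) L]

local notation "φ" => algebraMap (MvPolynomial (Fin n) K) L

theorem der_zero {E : L → L} (hEadd : ∀ a b, E (a + b) = E a + E b) : E 0 = 0 := by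
  have h := hEadd 0 0
  rw [add_zero] at h
  exact (add_eq_left.mp h.symm)

theorem der_neg {E : L → L} (hEadd : ∀ a b, E (a + b) = E a + E b) (a : L) :
    E (-a) = -E a := by
  have h := hEadd a (-a)
  rw [add_neg_cancel, der_zero hEadd] at h
  linear_combination -h

theorem der_frac_ext {E : L → L} (hEadd : ∀ a b, E (a + b) = E a + E b)
    (hEmul : ∀ a b, E (a * b) = a * E b + b * E a)
    (halg : ∀ g, E (φ g) = 0) (x : L) : E x = 0 := by
  obtain ⟨a, b, hb, hx⟩ := IsFractionRing.div_surjective (A := MvPolynomial (Fin n) K) x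
  have hbne : φ b ≠ 0 :=
    IsFractionRing.to_map_ne_zero_of_mem_nonZeroDivisors hb
  have ha : φ a = x * φ b := by
    rw [← hx, div_mul_cancel₀ _ hbne]
  have h0 := halg a
  rw [ha, hEmul, halg b, mul_zero, zero_add] at h0
  rcases mul_eq_zero.mp h0 with h | h
  · exact absurd h hbne
  · exact h

variable (D : Fin n → L → L)

theorem D_comm (hDadd : ∀ j a b, D j (a + b) = D j a + D j b)
    (hDmul : ∀ j a b, D j (a * b) = a * D j b + b * D j a)
    (hDalg : ∀ (j : Fin n) (g : MvPolynomial (Fin n) K), D j (φ g) = φ (pderiv j g))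
    (i j : Fin n) (x : L) : D i (D j x) = D j (D i x) := by
  have key : ∀ y : L, D i (D j y) - D j (D i y) = 0 := by
    apply der_frac_ext (K := K) (n := n)
    · intro a b; simp only [hDadd]; ring
    · intro a b
      simp only [hDmul, hDadd]
      ring
    · intro g
      rw [hDalg, hDalg, hDalg, hDalg, pderiv_comm' i j, sub_self]
  exact sub_eq_zero.mp (key x)

theorem D_iter_alg (hDalg : ∀ (j : Fin n) (g : MvPolynomial (Fin n) K), D j (φ g) = φ (pderiv j g))
    (j : Fin n) (k : ℕ) (q : MvPolynomial (Fin n) K) :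
    (D j)^[k] (φ q) = φ ((fun q => pderiv j q)^[k] q) := by
  induction k generalizing q with
  | zero => rfl
  | succ k ih => rw [Function.iterate_succ_apply, hDalg, ih, Function.iterate_succ_apply]

theorem D_iter_add (hDadd : ∀ j a b, D j (a + b) = D j a + D j b) (j : Fin n) (k : ℕ)
    (a b : L) : (D j)^[k] (a + b) = (D j)^[k] a + (D j)^[k] b := by
  induction k generalizing a b with
  | zero => rfl
  | succ k ih => rw [Function.iterate_succ_apply, Function.iterate_succ_apply,
      Function.iterate_succ_apply, hDadd, ih]

theorem D_iter_zero (hDadd : ∀ j a b, D j (a + b) = D j a + D j b) (j : Fin n) (k : ℕ) :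
    (D j)^[k] (0 : L) = 0 := by
  induction k with
  | zero => rfl
  | succ k ih => rw [Function.iterate_succ_apply, der_zero (hDadd j), ih]

theorem D_iter_const (hDadd : ∀ j a b, D j (a + b) = D j a + D j b)
    (hDmul : ∀ j a b, D j (a * b) = a * D j b + b * D j a) (j : Fin n) {c : L}
    (hc : D j c = 0) (k : ℕ) (x : L) : (D j)^[k] (c * x) = c * (D j)^[k] x := by
  induction k generalizing x with
  | zero => rfl
  | succ k ih =>
    rw [Function.iterate_succ_apply, Function.iterate_succ_apply, hDmul, hc, mul_zero,
      add_zero, ih]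

theorem D_iter_comm (hDadd : ∀ j a b, D j (a + b) = D j a + D j b)
    (hDmul : ∀ j a b, D j (a * b) = a * D j b + b * D j a)
    (hDalg : ∀ (j : Fin n) (g : MvPolynomial (Fin n) K), D j (φ g) = φ (pderiv j g))
    (i j : Fin n) (k : ℕ) (x : L) : D i ((D j)^[k] x) = (D j)^[k] (D i x) := by
  induction k generalizing x with
  | zero => rfl
  | succ k ih =>
    rw [Function.iterate_succ_apply, Function.iterate_succ_apply, ih,
      D_comm D hDadd hDmul hDalg i j]

end FieldAux
section FAux
variable {K : Type} [Field K] {n p : ℕ} [CharP K p]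
variable {L : Type} [Field L] [Algebra (MvPolynomial (Fin n) K) L]
  [IsFractionRing (MvPolynomial (Fin n) K) L] [Algebra K L]
  [IsScalarTower K (MvPolynomial (Fin n) K) L]

local notation "φ" => algebraMap (MvPolynomial (Fin n) K) L

theorem der_one {E : L → L} (hEmul : ∀ a b, E (a * b) = a * E b + b * E a) : E 1 = 0 := by
  have h := hEmul 1 1
  simp only [mul_one, one_mul] at h
  exact add_eq_left.mp h.symm

variable (p) in
/-- The subfield `K(z^p)`. -/
noncomputable def Fp : IntermediateField K L :=
  IntermediateField.adjoin K (Set.range fun i : Fin n => φ (X i ^ p))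

theorem D_kills_F (D : Fin n → L → L)
    (hDadd : ∀ j a b, D j (a + b) = D j a + D j b)
    (hDmul : ∀ j a b, D j (a * b) = a * D j b + b * D j a)
    (hDalg : ∀ (j : Fin n) (g : MvPolynomial (Fin n) K), D j (φ g) = φ (pderiv j g))
    (j : Fin n) {y : L} (hy : y ∈ Fp p (K := K) (n := n) (L := L)) : D j y = 0 := by
  have hy' : y ∈ IntermediateField.adjoin K (Set.range fun i : Fin n => φ (X i ^ p)) := hy
  clear hy
  induction hy' using IntermediateField.adjoin_induction with
  | mem x hx =>
    obtain ⟨i, rfl⟩ := hx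
    rw [hDalg]
    have h0 : pderiv j (X i ^ p : MvPolynomial (Fin n) K) = 0 := by
      rw [X_pow_eq_monomial, pderiv_monomial]
      have hc : (((Finsupp.single i p) j : ℕ) : K) = 0 := by
        rw [Finsupp.single_apply]
        split_ifs
        · exact CharP.cast_eq_zero K p
        · exact Nat.cast_zero
      rw [hc, mul_zero, map_zero]
    rw [h0, map_zero]
  | algebraMap x =>
    have h1 : algebraMap K L x = φ (C x) := by
      rw [IsScalarTower.algebraMap_apply K (MvPolynomial (Fin n) K) L,
        MvPolynomial.algebraMap_eq]
    rw [h1, hDalg, pderiv_C, map_zero]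
  | add a b _ _ ha hb =>
    rw [hDadd, ha, hb, add_zero]
  | inv a _ ha =>
    rcases eq_or_ne a 0 with rfl | h
    · rw [inv_zero]; exact der_zero (hDadd j)
    · have h1 := hDmul j a a⁻¹
      rw [mul_inv_cancel₀ h, der_one (hDmul j), ha, mul_zero, add_zero] at h1
      rcases mul_eq_zero.mp h1.symm with h2 | h2
      · exact absurd h2 h
      · exact h2
  | mul a b _ _ ha hb =>
    rw [hDmul, ha, hb, mul_zero, mul_zero, add_zero]

theorem mem_span_monomials (hp : p.Prime) (x : L) :
    x ∈ Submodule.span (Fp p (K := K) (n := n) (L := L))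
      (Set.range fun e : Fin n →₀ ℕ => φ (monomial e (1 : K))) := by
  set F := Fp p (K := K) (n := n) (L := L) with hF
  have hXmem : ∀ i : Fin n, φ (X i ^ p) ∈ F := fun i =>
    IntermediateField.subset_adjoin _ _ ⟨i, rfl⟩
  have hint : ∀ i : Fin n, IsIntegral F (φ (X i)) := by
    intro i
    refine ⟨Polynomial.X ^ p - Polynomial.C ⟨φ (X i ^ p), hXmem i⟩,
      Polynomial.monic_X_pow_sub_C _ hp.ne_zero, ?_⟩
    have : (algebraMap F L) ⟨φ (X i ^ p), hXmem i⟩ = φ (X i ^ p) := rfl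
    simp [Polynomial.eval₂_sub, this, ← map_pow]
  have htop : ∀ y : L,
      y ∈ IntermediateField.adjoin F (Set.range fun i : Fin n => φ (X i)) := by
    intro y
    obtain ⟨a, b, hb, hy⟩ := IsFractionRing.div_surjective (A := MvPolynomial (Fin n) K) y
    have halg : ∀ g : MvPolynomial (Fin n) K,
        φ g ∈ IntermediateField.adjoin F (Set.range fun i : Fin n => φ (X i)) := by
      intro g
      induction g using MvPolynomial.induction_on with
      | C a =>
        have h1 : φ (C a) = algebraMap F L (algebraMap K F a) := by
          rw [← IsScalarTower.algebraMap_apply K F L,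
            IsScalarTower.algebraMap_apply K (MvPolynomial (Fin n) K) L,
            MvPolynomial.algebraMap_eq]
        rw [h1]; exact IntermediateField.algebraMap_mem _ _
      | add f g hf hg => rw [map_add]; exact add_mem hf hg
      | mul_X f i hf => rw [map_mul]; exact mul_mem hf (IntermediateField.subset_adjoin _ _ ⟨i, rfl⟩)
    rw [← hy]; exact div_mem (halg a) (halg b)
  have hx := htop x
  rw [← IntermediateField.mem_toSubalgebra,
    IntermediateField.adjoin_toSubalgebra_of_isAlgebraic
      (fun y hy => by obtain ⟨i, rfl⟩ := hy; exact (hint i).isAlgebraic)] at hx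
  rw [← Subalgebra.mem_toSubmodule, Algebra.adjoin_eq_span] at hx
  refine Submodule.span_le.mpr ?_ hx
  intro y hy
  have hmono : ∃ e : Fin n →₀ ℕ, y = φ (monomial e (1 : K)) := by
    refine Submonoid.closure_induction ?_ ?_ ?_ hy
    · rintro z ⟨i, rfl⟩; exact ⟨Finsupp.single i 1, rfl⟩
    · exact ⟨0, by rw [monomial_zero', map_one, map_one]⟩
    · rintro a b _ _ ⟨e, rfl⟩ ⟨f, rfl⟩
      exact ⟨e + f, by rw [← map_mul, monomial_mul, one_mul]⟩
  obtain ⟨e, rfl⟩ := hmono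
  exact Submodule.subset_span ⟨e, rfl⟩

end FAux
section KerAux
variable {K : Type} [Field K] {n p : ℕ} [CharP K p]
variable {L : Type} [Field L] [Algebra (MvPolynomial (Fin n) K) L]
  [IsFractionRing (MvPolynomial (Fin n) K) L] [Algebra K L]
  [IsScalarTower K (MvPolynomial (Fin n) K) L]

local notation "φ" => algebraMap (MvPolynomial (Fin n) K) L

/-- The operator `y ↦ -∂_j^{p-1}(z_j^{p-1} y)`. -/
noncomputable def piOp (D : Fin n → L → L) (p : ℕ) (j : Fin n) (y : L) : L :=
  -((D j)^[p - 1] (φ (X j ^ (p - 1)) * y))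

noncomputable def piList (D : Fin n → L → L) (p : ℕ) (l : List (Fin n)) (y : L) : L :=
  l.foldr (piOp (K := K) D p) y

variable (D : Fin n → L → L)

theorem D_iter_const_right
    (hDmul : ∀ j a b, D j (a * b) = a * D j b + b * D j a)
    (hDalg : ∀ (j : Fin n) (g : MvPolynomial (Fin n) K), D j (φ g) = φ (pderiv j g))
    (j : Fin n) {x : L} (hx : D j x = 0) (k : ℕ)
    (q : MvPolynomial (Fin n) K) :
    (D j)^[k] (φ q * x) = φ ((fun q => pderiv j q)^[k] q) * x := by
  induction k generalizing q with
  | zero => rfl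
  | succ k ih =>
    rw [Function.iterate_succ_apply, hDmul, hx, mul_zero, zero_add, hDalg, mul_comm x, ih,
      Function.iterate_succ_apply]

theorem piOp_fixed (hp : p.Prime)
    (hDmul : ∀ j a b, D j (a * b) = a * D j b + b * D j a)
    (hDalg : ∀ (j : Fin n) (g : MvPolynomial (Fin n) K), D j (φ g) = φ (pderiv j g))
    (j : Fin n) {x : L} (hx : D j x = 0) :
    piOp (K := K) D p j x = x := by
  rw [piOp, D_iter_const_right D hDmul hDalg j hx]
  rw [X_pow_eq_monomial, pderiv_iterate_monomial]
  have h1 : ((Finsupp.single j (p - 1)) j) = p - 1 := Finsupp.single_eq_same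
  rw [h1]
  have h2 : (∏ t ∈ Finset.range (p - 1), (((p - 1) - t : ℕ) : K)) = -1 := by
    have h0 := cast_factorial_aux (K := K) p hp 0
    rw [if_pos (dvd_zero p)] at h0
    rw [← h0]
    exact Finset.prod_congr rfl fun t _ => by rw [Nat.zero_add]
  rw [h2, tsub_self, one_mul, monomial_zero']
  have h3 : (C (-1 : K) : MvPolynomial (Fin n) K) = -1 := by
    rw [map_neg, map_one]
  rw [h3, map_neg, map_one, neg_mul, one_mul, neg_neg]

theorem piOp_alg
    (hDalg : ∀ (j : Fin n) (g : MvPolynomial (Fin n) K), D j (φ g) = φ (pderiv j g))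
    (j : Fin n) (q : MvPolynomial (Fin n) K) :
    piOp (K := K) D p j (φ q) = φ (polyPi p j q) := by
  rw [piOp, ← map_mul, D_iter_alg D hDalg, polyPi, map_neg]

theorem piOp_const
    (hDadd : ∀ j a b, D j (a + b) = D j a + D j b)
    (hDmul : ∀ j a b, D j (a * b) = a * D j b + b * D j a)
    (j : Fin n) {c : L} (hc : D j c = 0) (y : L) :
    piOp (K := K) D p j (c * y) = c * piOp (K := K) D p j y := by
  rw [piOp, piOp, mul_left_comm, D_iter_const D hDadd hDmul j hc, neg_mul_eq_mul_neg]

theorem piOp_add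
    (hDadd : ∀ j a b, D j (a + b) = D j a + D j b)
    (j : Fin n) (a b : L) :
    piOp (K := K) D p j (a + b) = piOp (K := K) D p j a + piOp (K := K) D p j b := by
  rw [piOp, piOp, piOp, mul_add, D_iter_add D hDadd, neg_add]

theorem piOp_zero
    (hDadd : ∀ j a b, D j (a + b) = D j a + D j b)
    (j : Fin n) : piOp (K := K) D p j (0 : L) = 0 := by
  rw [piOp, mul_zero, D_iter_zero D hDadd, neg_zero]

theorem piList_fixed (hp : p.Prime)
    (hDmul : ∀ j a b, D j (a * b) = a * D j b + b * D j a)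
    (hDalg : ∀ (j : Fin n) (g : MvPolynomial (Fin n) K), D j (φ g) = φ (pderiv j g))
    (l : List (Fin n)) {x : L} (hx : ∀ j, D j x = 0) :
    piList (K := K) D p l x = x := by
  induction l with
  | nil => rfl
  | cons j l ih =>
    rw [piList, List.foldr_cons, ← piList, ih, piOp_fixed D hp hDmul hDalg j (hx j)]

theorem piList_alg
    (hDalg : ∀ (j : Fin n) (g : MvPolynomial (Fin n) K), D j (φ g) = φ (pderiv j g))
    (l : List (Fin n)) (q : MvPolynomial (Fin n) K) :
    piList (K := K) D p l (φ q) = φ (l.foldr (polyPi p) q) := by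
  induction l generalizing q with
  | nil => rfl
  | cons j l ih =>
    rw [piList, List.foldr_cons, ← piList, ih, piOp_alg D hDalg, List.foldr_cons]

theorem piList_const
    (hDadd : ∀ j a b, D j (a + b) = D j a + D j b)
    (hDmul : ∀ j a b, D j (a * b) = a * D j b + b * D j a)
    (l : List (Fin n)) {c : L} (hc : ∀ j, D j c = 0) (y : L) :
    piList (K := K) D p l (c * y) = c * piList (K := K) D p l y := by
  induction l generalizing y with
  | nil => rfl
  | cons j l ih =>
    rw [piList, List.foldr_cons, ← piList, ih, piOp_const D hDadd hDmul j (hc j)]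
    rfl

theorem piList_add
    (hDadd : ∀ j a b, D j (a + b) = D j a + D j b)
    (l : List (Fin n)) (a b : L) :
    piList (K := K) D p l (a + b) = piList (K := K) D p l a + piList (K := K) D p l b := by
  induction l generalizing a b with
  | nil => rfl
  | cons j l ih =>
    rw [piList, List.foldr_cons, ← piList, ih, piOp_add D hDadd]
    rfl

theorem piList_zero
    (hDadd : ∀ j a b, D j (a + b) = D j a + D j b)
    (l : List (Fin n)) : piList (K := K) D p l (0 : L) = 0 := by
  induction l with
  | nil => rfl
  | cons j l ih =>
    rw [piList, List.foldr_cons, ← piList, ih, piOp_zero D hDadd]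

omit [CharP K p] in
theorem mem_F_of_p_dvd_monomial {e : Fin n →₀ ℕ} (h : ∀ j : Fin n, p ∣ e j) :
    φ (monomial e (1 : K)) ∈ Fp p (K := K) (n := n) (L := L) := by
  rw [monomial_eq, map_one, one_mul, Finsupp.prod, map_prod]
  refine prod_mem fun i _ => ?_
  have h1 : e i = p * (e i / p) := (Nat.mul_div_cancel' (h i)).symm
  rw [h1, pow_mul, map_pow]
  exact pow_mem (IntermediateField.subset_adjoin K _ (Set.mem_range_self i)) _

/-- The kernel of all the `D j` is contained in `K(z^p)`. -/
theorem mem_F_of_killed (hp : p.Prime)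
    (hDadd : ∀ j a b, D j (a + b) = D j a + D j b)
    (hDmul : ∀ j a b, D j (a * b) = a * D j b + b * D j a)
    (hDalg : ∀ (j : Fin n) (g : MvPolynomial (Fin n) K), D j (φ g) = φ (pderiv j g))
    {x : L} (hx : ∀ j, D j x = 0) :
    x ∈ Fp p (K := K) (n := n) (L := L) := by
  have h2 : ∀ y : L, piList (K := K) D p (List.finRange n) y ∈ Fp p (K := K) (n := n) (L := L) := by
    intro z
    have hs := mem_span_monomials (K := K) (n := n) (L := L) hp z
    induction hs using Submodule.span_induction with
    | mem y hy =>
      obtain ⟨e, rfl⟩ := hy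
      rw [piList_alg D hDalg, polyPi_foldr_monomial p hp]
      split_ifs with hdvd
      · exact mem_F_of_p_dvd_monomial fun j => hdvd j (List.mem_finRange j)
      · rw [map_zero]; exact zero_mem _
    | zero => rw [piList_zero D hDadd]; exact zero_mem _
    | add a b _ _ ha hb => rw [piList_add D hDadd]; exact add_mem ha hb
    | smul a y _ hy =>
      have hsm : a • y = (a : L) * y := by rw [Algebra.smul_def]; rfl
      rw [hsm, piList_const D hDadd hDmul _
        (fun j => D_kills_F D hDadd hDmul hDalg j a.2)]
      exact mul_mem a.2 hy
  have h1 : piList (K := K) D p (List.finRange n) x = x :=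
    piList_fixed D hp hDmul hDalg _ hx
  rw [← h1]
  exact h2 x

/-- `D_j^p = 0` on all of `L`. -/
theorem D_iter_p_zero (hp : p.Prime)
    (hDadd : ∀ j a b, D j (a + b) = D j a + D j b)
    (hDmul : ∀ j a b, D j (a * b) = a * D j b + b * D j a)
    (hDalg : ∀ (j : Fin n) (g : MvPolynomial (Fin n) K), D j (φ g) = φ (pderiv j g))
    (j : Fin n) (x : L) : (D j)^[p] x = 0 := by
  have hs := mem_span_monomials (K := K) (n := n) (L := L) hp x
  induction hs using Submodule.span_induction with
  | mem y hy =>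
    obtain ⟨e, rfl⟩ := hy
    rw [D_iter_alg D hDalg, pderiv_iterate_p p hp, map_zero]
  | zero => exact D_iter_zero D hDadd j p
  | add a b _ _ ha hb => rw [D_iter_add D hDadd, ha, hb, add_zero]
  | smul a y _ hy =>
    have hsm : a • y = (a : L) * y := by rw [Algebra.smul_def]; rfl
    rw [hsm, D_iter_const D hDadd hDmul j (D_kills_F D hDadd hDmul hDalg j a.2), hy, mul_zero]

end KerAux
section MainAux
variable {K : Type} [Field K] {n p : ℕ} [CharP K p]
variable {L : Type} [Field L] [Algebra (MvPolynomial (Fin n) K) L]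
  [IsFractionRing (MvPolynomial (Fin n) K) L] [Algebra K L]
  [IsScalarTower K (MvPolynomial (Fin n) K) L]

local notation "φ" => algebraMap (MvPolynomial (Fin n) K) L

variable (D : Fin n → L → L)

/-- `∂_{i_1}^{p-1} ⋯ ∂_{i_m}^{p-1}` along a list. -/
def gList (p : ℕ) (l : List (Fin n)) (y : L) : L :=
  l.foldr (fun i g => (D i)^[p - 1] g) y

omit [CharP K p] [Algebra (MvPolynomial (Fin n) K) L]
  [IsFractionRing (MvPolynomial (Fin n) K) L] [Algebra K L]
  [IsScalarTower K (MvPolynomial (Fin n) K) L] in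
theorem gList_add (hDadd : ∀ j a b, D j (a + b) = D j a + D j b)
    (l : List (Fin n)) (a b : L) :
    gList D p l (a + b) = gList D p l a + gList D p l b := by
  induction l generalizing a b with
  | nil => rfl
  | cons i l ih =>
    show (D i)^[p-1] (gList D p l (a + b)) = _
    rw [ih, D_iter_add D hDadd]
    rfl

omit [CharP K p] [Algebra (MvPolynomial (Fin n) K) L]
  [IsFractionRing (MvPolynomial (Fin n) K) L] [Algebra K L]
  [IsScalarTower K (MvPolynomial (Fin n) K) L] in
theorem gList_zero (hDadd : ∀ j a b, D j (a + b) = D j a + D j b)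
    (l : List (Fin n)) : gList D p l (0 : L) = 0 := by
  induction l with
  | nil => rfl
  | cons i l ih =>
    show (D i)^[p-1] (gList D p l 0) = 0
    rw [ih, D_iter_zero D hDadd]

omit [CharP K p] [Algebra (MvPolynomial (Fin n) K) L]
  [IsFractionRing (MvPolynomial (Fin n) K) L] [Algebra K L]
  [IsScalarTower K (MvPolynomial (Fin n) K) L] in
theorem gList_const (hDadd : ∀ j a b, D j (a + b) = D j a + D j b)
    (hDmul : ∀ j a b, D j (a * b) = a * D j b + b * D j a)
    (l : List (Fin n)) {c : L} (hc : ∀ m, D m c = 0) (y : L) :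
    gList D p l (c * y) = c * gList D p l y := by
  induction l generalizing y with
  | nil => rfl
  | cons i l ih =>
    show (D i)^[p-1] (gList D p l (c * y)) = _
    rw [ih, D_iter_const D hDadd hDmul i (hc i)]
    rfl

theorem gList_comm (hDadd : ∀ j a b, D j (a + b) = D j a + D j b)
    (hDmul : ∀ j a b, D j (a * b) = a * D j b + b * D j a)
    (hDalg : ∀ (j : Fin n) (g : MvPolynomial (Fin n) K), D j (φ g) = φ (pderiv j g))
    (l : List (Fin n)) (j : Fin n) (y : L) :
    D j (gList D p l y) = gList D p l (D j y) := by
  induction l generalizing y with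
  | nil => rfl
  | cons i l ih =>
    show D j ((D i)^[p-1] (gList D p l y)) = (D i)^[p-1] (gList D p l (D j y))
    rw [D_iter_comm D hDadd hDmul hDalg j i, ih]

theorem gList_kill (hp : p.Prime)
    (hDadd : ∀ j a b, D j (a + b) = D j a + D j b)
    (hDmul : ∀ j a b, D j (a * b) = a * D j b + b * D j a)
    (hDalg : ∀ (j : Fin n) (g : MvPolynomial (Fin n) K), D j (φ g) = φ (pderiv j g))
    (l : List (Fin n)) (j : Fin n) (hj : j ∈ l) (y : L) :
    gList D p l (D j y) = 0 := by
  induction l generalizing y with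
  | nil => exact absurd hj List.not_mem_nil
  | cons i l ih =>
    show (D i)^[p-1] (gList D p l (D j y)) = 0
    by_cases hjl : j ∈ l
    · rw [ih hjl, D_iter_zero D hDadd]
    · have hij : i = j := by
        rcases List.mem_cons.mp hj with h | h
        · exact h.symm
        · exact absurd h hjl
      subst hij
      rw [← gList_comm D hDadd hDmul hDalg, ← Function.iterate_succ_apply]
      have hpp : (p - 1).succ = p := by have := hp.pos; omega
      rw [hpp]
      exact D_iter_p_zero D hp hDadd hDmul hDalg i _

omit [CharP K p] [Algebra (MvPolynomial (Fin n) K) L]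
  [IsFractionRing (MvPolynomial (Fin n) K) L] [Algebra K L]
  [IsScalarTower K (MvPolynomial (Fin n) K) L] in
theorem D_neg_one_pow (hDadd : ∀ j a b, D j (a + b) = D j a + D j b)
    (hDmul : ∀ j a b, D j (a * b) = a * D j b + b * D j a)
    (m : Fin n) (k : ℕ) : D m ((-1 : L) ^ k) = 0 := by
  induction k with
  | zero => rw [pow_zero]; exact der_one (hDmul m)
  | succ k ih =>
    rw [pow_succ, hDmul]
    have h1 : D m (-1 : L) = 0 := by
      have := der_neg (hDadd m) (1 : L)
      rw [der_one (hDmul m), neg_zero] at this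
      exact this
    rw [h1, ih, mul_zero, mul_zero, add_zero]

/-- The main vanishing statement: closedness kills all derivatives of the iterated
partial derivative of each coefficient. -/
theorem main_vanish (hp : p.Prime)
    (hDadd : ∀ j a b, D j (a + b) = D j a + D j b)
    (hDmul : ∀ j a b, D j (a * b) = a * D j b + b * D j a)
    (hDalg : ∀ (j : Fin n) (g : MvPolynomial (Fin n) K), D j (φ g) = φ (pderiv j g))
    {r : ℕ} (ω : GForm L n r) (hclosed : gextd D ω = 0)
    (T : {s : Finset (Fin n) // s.card = r}) (j : Fin n) :
    D j (gpdSet D p T.1 (ω T)) = 0 := by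
  have hgl : gpdSet D p T.1 (ω T) = gList D p (T.1.sort (· ≤ ·)) (ω T) := rfl
  by_cases hjT : j ∈ T.1
  · rw [hgl, gList_comm D hDadd hDmul hDalg]
    exact gList_kill D hp hDadd hDmul hDalg _ j ((Finset.mem_sort _).mpr hjT) _
  · set l := T.1.sort (· ≤ ·) with hl
    have hT' : (insert j T.1).card = r + 1 := by
      rw [Finset.card_insert_of_notMem hjT, T.2]
    set T' : {s : Finset (Fin n) // s.card = r + 1} := ⟨insert j T.1, hT'⟩ with hT'def
    have h0 : gextd D ω T' = 0 := by rw [hclosed]; rfl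
    rw [gextd] at h0
    have h1 := congrArg (AddMonoidHom.mk' (gList D p l) (gList_add D hDadd l)) h0
    rw [map_sum, map_zero] at h1
    have hjmem : j ∈ T'.1 := Finset.mem_insert_self j T.1
    rw [Finset.sum_eq_single_of_mem (⟨j, hjmem⟩ : {x // x ∈ T'.1}) (Finset.mem_attach _ _)
      (by
        intro x _ hne
        have hxj : x.1 ≠ j := fun h => hne (Subtype.ext h)
        have hxT : x.1 ∈ T.1 := by
          rcases Finset.mem_insert.mp x.2 with h | h
          · exact absurd h hxj
          · exact h
        show gList D p l ((-1 : L) ^ _ * D x.1 _) = 0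
        rw [gList_const D hDadd hDmul l (fun m => D_neg_one_pow D hDadd hDmul m _),
          gList_kill D hp hDadd hDmul hDalg l x.1 ((Finset.mem_sort _).mpr hxT), mul_zero])]
      at h1
    have herase : (⟨T'.1.erase j, by
        rw [Finset.card_erase_of_mem hjmem, T'.2]; rfl⟩ : {s : Finset (Fin n) // s.card = r})
        = T := Subtype.ext (by show (insert j T.1).erase j = T.1; rw [Finset.erase_insert hjT])
    have h2 : gList D p l ((-1 : L) ^ ((T'.1.filter (fun k => k < j)).card) * D j (ω T)) = 0 := by
      rw [← herase]
      exact h1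
    rw [gList_const D hDadd hDmul l (fun m => D_neg_one_pow D hDadd hDmul m _)] at h2
    rcases mul_eq_zero.mp h2 with h3 | h3
    · exact absurd h3 (pow_ne_zero _ (neg_ne_zero.mpr one_ne_zero))
    · rw [hgl, gList_comm D hDadd hDmul hDalg]
      exact h3

end MainAux

/-- Over a field `K` of characteristic `p > 0`, if `ω = ∑_I a_I dz_I` is a
closed rational `r`-form, then for every multi-index `I` the function
`∂_I^{p-1}(a_I) = ∂_{i_1}^{p-1} ⋯ ∂_{i_r}^{p-1}(a_I)` lies in `K(z_1^p,…,z_n^p)`;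
equivalently all its partial derivatives vanish. The partial derivatives on `K(z)` are any
family of derivations extending the formal `∂_j` of `K[z]`. -/
theorem closed_form_iterated_deriv_coeff_mem_pth_power_subfield
    (K : Type) [Field K] (p n r : ℕ) [CharP K p] (hp : 0 < p)
    (D : Fin n → FractionRing (MvPolynomial (Fin n) K) → FractionRing (MvPolynomial (Fin n) K))
    (hDadd : ∀ j a b, D j (a + b) = D j a + D j b)
    (hDmul : ∀ j a b, D j (a * b) = a * D j b + b * D j a)
    (hDalg : ∀ (j : Fin n) (g : MvPolynomial (Fin n) K),
      D j (algebraMap (MvPolynomial (Fin n) K) (FractionRing (MvPolynomial (Fin n) K)) g) =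
        algebraMap (MvPolynomial (Fin n) K) (FractionRing (MvPolynomial (Fin n) K)) (pderiv j g))
    (ω : GForm (FractionRing (MvPolynomial (Fin n) K)) n r)
    (hclosed : gextd D ω = 0) :
    ∀ T : {s : Finset (Fin n) // s.card = r},
      gpdSet D p T.1 (ω T) ∈
          IntermediateField.adjoin K (Set.range fun i : Fin n =>
            algebraMap (MvPolynomial (Fin n) K) (FractionRing (MvPolynomial (Fin n) K))
              (X i ^ p)) ∧
        ∀ j : Fin n, D j (gpdSet D p T.1 (ω T)) = 0 := by
  intro T
  have hprime : p.Prime := (CharP.char_is_prime_or_zero K p).resolve_right hp.ne'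
  have hvan : ∀ j : Fin n, D j (gpdSet D p T.1 (ω T)) = 0 := fun j =>
    main_vanish D hprime hDadd hDmul hDalg ω hclosed T j
  exact ⟨mem_F_of_killed D hprime hDadd hDmul hDalg hvan, hvan⟩
end
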